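/- For a row-stochastic-like positive linear map: if A is an N×N matrix with strictly positive entries, then A maps the positive cone into itself and is a strict contraction in the Hilbert projective metric, with contraction coefficient tanh(Δ(A)/4) < 1 where Δ(A) = max_{i,j,k,l} log((A_{ik}A_{jl})/(A_{jk}A_{il})) is the projective diameter of the image. -/

import Mathlib

/-- Hilbert's projective (pseudo)metric on the positive cone of `ℝ^N`. -/
noncomputable def hilbertDist {N : ℕ} (x y : Fin N → ℝ) : ℝ :=
  Real.log ((⨆ i, x i / y i) / (⨅ i, x i / y i))

/-- Projective diameter of the image of a positive matrix `A`:
`Δ(A) = max_{i,j,k,l} log((A_{ik} A_{jl})/(A_{jk} A_{il}))`. -/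
noncomputable def projDiam {N : ℕ} (A : Matrix (Fin N) (Fin N) ℝ) : ℝ :=
  ⨆ i, ⨆ j, ⨆ k, ⨆ l, Real.log ((A i k * A j l) / (A j k * A i l))

open Real

/-- tanh is at most 1. -/
lemma my_tanh_le_one (x : ℝ) : Real.tanh x ≤ 1 := by
  rw [Real.tanh_eq_sinh_div_cosh, div_le_one (Real.cosh_pos x)]
  nlinarith [Real.cosh_sub_sinh x, Real.exp_pos (-x)]

lemma my_tanh_lt_one (x : ℝ) : Real.tanh x < 1 := by
  rw [Real.tanh_eq_sinh_div_cosh, div_lt_one (Real.cosh_pos x)]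
  nlinarith [Real.cosh_sub_sinh x, Real.exp_pos (-x)]

lemma my_tanh_nonneg {x : ℝ} (hx : 0 ≤ x) : 0 ≤ Real.tanh x := by
  rw [Real.tanh_eq_sinh_div_cosh]
  exact div_nonneg (by rwa [Real.sinh_nonneg_iff]) (Real.cosh_pos x).le

/-- key derivative bound: tanh(x+u) - tanh(x-u) ≤ 2 tanh u for x, u ≥ 0 -/
lemma tanh_diff_le (u x : ℝ) (hu : 0 ≤ u) : Real.tanh (x + u) - Real.tanh (x - u) ≤ 2 * Real.tanh u := by
  have h1 := Real.cosh_pos (x + u)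
  have h2 := Real.cosh_pos (x - u)
  have h3 := Real.cosh_pos u
  rw [Real.tanh_eq_sinh_div_cosh, Real.tanh_eq_sinh_div_cosh, Real.tanh_eq_sinh_div_cosh,
    div_sub_div _ _ h1.ne' h2.ne', mul_div_assoc',
    div_le_div_iff₀ (by positivity) h3]
  have hs : Real.sinh (x + u) * Real.cosh (x - u) - Real.cosh (x + u) * Real.sinh (x - u)
      = Real.sinh (2 * u) := by
    rw [← Real.sinh_sub]; ring_nf
  rw [hs, Real.sinh_two_mul]
  have hc : Real.cosh (x + u) * Real.cosh (x - u) = Real.cosh u ^ 2 + Real.sinh x ^ 2 := by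
    rw [Real.cosh_add, Real.cosh_sub]
    nlinarith [Real.cosh_sq_sub_sinh_sq x, Real.cosh_sq_sub_sinh_sq u]
  have hsu : 0 ≤ Real.sinh u := by rwa [Real.sinh_nonneg_iff]
  nlinarith [sq_nonneg (Real.sinh x)]

/-- Lemma 1: log cosh(x+u) - log cosh(x-u) ≤ 2 x tanh u for x, u ≥ 0. -/
lemma logcosh_diff_le (u x : ℝ) (hu : 0 ≤ u) (hx : 0 ≤ x) :
    Real.log (Real.cosh (x + u)) - Real.log (Real.cosh (x - u)) ≤ 2 * x * Real.tanh u := by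
  set F : ℝ → ℝ := fun z => 2 * Real.tanh u * z - Real.log (Real.cosh (z + u))
      + Real.log (Real.cosh (z - u)) with hF
  have hder : ∀ z : ℝ, HasDerivAt F
      (2 * Real.tanh u - Real.tanh (z + u) + Real.tanh (z - u)) z := by
    intro z
    have d1 : HasDerivAt (fun z : ℝ => Real.log (Real.cosh (z + u)))
        (Real.sinh (z + u) / Real.cosh (z + u)) z := by
      have : HasDerivAt (fun z : ℝ => Real.cosh (z + u)) (Real.sinh (z + u) * 1) z :=
        by have := (Real.hasDerivAt_cosh (z + u)).comp z ((hasDerivAt_id z).add_const u); exact this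
      simpa using this.log (Real.cosh_pos (z + u)).ne'
    have d2 : HasDerivAt (fun z : ℝ => Real.log (Real.cosh (z - u)))
        (Real.sinh (z - u) / Real.cosh (z - u)) z := by
      have : HasDerivAt (fun z : ℝ => Real.cosh (z - u)) (Real.sinh (z - u) * 1) z :=
        by have := (Real.hasDerivAt_cosh (z - u)).comp z ((hasDerivAt_id z).sub_const u); exact this
      simpa using this.log (Real.cosh_pos (z - u)).ne'
    have d0 : HasDerivAt (fun z : ℝ => 2 * Real.tanh u * z) (2 * Real.tanh u) z := by
      simpa using (hasDerivAt_id z).const_mul (2 * Real.tanh u)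
    have := (d0.sub d1).add d2
    rw [hF, Real.tanh_eq_sinh_div_cosh (z + u), Real.tanh_eq_sinh_div_cosh (z - u)]
    exact this
  have hmono : MonotoneOn F (Set.Ici (0:ℝ)) := by
    apply monotoneOn_of_deriv_nonneg (convex_Ici 0)
    · exact fun z _ => ((hder z).continuousAt).continuousWithinAt
    · exact fun z _ => ((hder z).differentiableAt).differentiableWithinAt
    · intro z hz
      rw [(hder z).deriv]
      have := tanh_diff_le u z hu
      linarith
  have h0 : F 0 = 0 := by
    simp [hF, Real.cosh_neg]
  have hx' : F 0 ≤ F x := hmono (Set.self_mem_Ici) (Set.mem_Ici.mpr hx) hx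
  rw [h0] at hx'
  simp only [hF] at hx'
  linarith

/-- star-star inequality: exp(x+2u) + 1 ≤ exp(x tanh u) (exp x + exp 2u). -/
lemma starstar (u x : ℝ) (hu : 0 ≤ u) (hx : 0 ≤ x) :
    Real.exp (x + 2 * u) + 1 ≤ Real.exp (Real.tanh u * x) * (Real.exp x + Real.exp (2 * u)) := by
  have h := logcosh_diff_le u (x / 2) hu (by linarith)
  have hcosh1 : (0:ℝ) < Real.cosh (x / 2 + u) := Real.cosh_pos _
  have hcosh2 : (0:ℝ) < Real.cosh (x / 2 - u) := Real.cosh_pos _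
  have h2 : Real.cosh (x / 2 + u) ≤ Real.exp (Real.tanh u * x) * Real.cosh (x / 2 - u) := by
    have : Real.log (Real.cosh (x / 2 + u)) ≤
        Real.tanh u * x + Real.log (Real.cosh (x / 2 - u)) := by linarith
    calc Real.cosh (x / 2 + u) = Real.exp (Real.log (Real.cosh (x / 2 + u))) :=
          (Real.exp_log hcosh1).symm
      _ ≤ Real.exp (Real.tanh u * x + Real.log (Real.cosh (x / 2 - u))) := Real.exp_le_exp.mpr this
      _ = Real.exp (Real.tanh u * x) * Real.cosh (x / 2 - u) := by
          rw [Real.exp_add, Real.exp_log hcosh2]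
  have hP : (0:ℝ) < Real.exp (x / 2 + u) := Real.exp_pos _
  have h3 := mul_le_mul_of_nonneg_left h2 (le_of_lt hP)
  rw [Real.cosh_eq, Real.cosh_eq] at h3
  have e1 : Real.exp (x / 2 + u) * Real.exp (x / 2 + u) = Real.exp (x + 2 * u) := by
    rw [← Real.exp_add]; ring_nf
  have e2 : Real.exp (x / 2 + u) * Real.exp (-(x / 2 + u)) = 1 := by
    rw [← Real.exp_add]; ring_nf; exact Real.exp_zero
  have e3 : Real.exp (x / 2 + u) * Real.exp (x / 2 - u) = Real.exp x := by
    rw [← Real.exp_add]; ring_nf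
  have e4 : Real.exp (x / 2 + u) * Real.exp (-(x / 2 - u)) = Real.exp (2 * u) := by
    rw [← Real.exp_add]; ring_nf
  nlinarith [h3, Real.exp_pos (Real.tanh u * x)]

/-- linear step -/
lemma lin_step (u x ξ η : ℝ) (hu : 0 ≤ u) (hx : 0 ≤ x) (hξ : 0 ≤ ξ) (hη : 0 ≤ η)
    (hξη : ξ ≤ Real.exp (2 * u) * η) :
    Real.exp x * ξ + η ≤ Real.exp (Real.tanh u * x) * (Real.exp x * η + ξ) := by
  have hτ0 : 0 ≤ Real.tanh u := my_tanh_nonneg hu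
  have hτ1 : Real.tanh u ≤ 1 := my_tanh_le_one u
  have hmono : Real.exp (Real.tanh u * x) ≤ Real.exp x :=
    Real.exp_le_exp.mpr (by nlinarith)
  have hss := starstar u x hu hx
  -- ξ * (exp x - exp (tanh u * x)) ≤ exp (2u) * η * (exp x - exp (tanh u * x))
  have key : Real.exp (2 * u) * (Real.exp x - Real.exp (Real.tanh u * x))
      ≤ Real.exp (Real.tanh u * x) * Real.exp x - 1 := by
    rw [Real.exp_add] at hss
    nlinarith [hss]
  have h1 : ξ * (Real.exp x - Real.exp (Real.tanh u * x))
      ≤ Real.exp (2 * u) * η * (Real.exp x - Real.exp (Real.tanh u * x)) :=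
    mul_le_mul_of_nonneg_right hξη (by linarith)
  have h2 : Real.exp (2 * u) * η * (Real.exp x - Real.exp (Real.tanh u * x))
      ≤ η * (Real.exp (Real.tanh u * x) * Real.exp x - 1) := by
    have := mul_le_mul_of_nonneg_left key hη
    nlinarith [this]
  nlinarith [h1, h2]

/-- quadratic scalar step -/
lemma quad_step (m M X Y Z u : ℝ) (hm : 0 < m) (hmM : m ≤ M) (hX : 0 ≤ X) (hY : 0 ≤ Y)
    (hu : 0 ≤ u) (hXY : X ≤ Real.exp (4 * u) * Y)
    (hZ : 2 * Real.sqrt (M * m * (X * Y)) ≤ Z) :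
    M * X + m * Y ≤ Real.exp (Real.tanh u * Real.log (M / m)) * (M * Y + m * X)
      + (Real.exp (Real.tanh u * Real.log (M / m)) - 1) * Z := by
  have hM : 0 < M := lt_of_lt_of_le hm hmM
  set x : ℝ := Real.log (M / m) / 2 with hxdef
  have hlog : 0 ≤ Real.log (M / m) := Real.log_nonneg ((one_le_div hm).mpr hmM)
  have hx : 0 ≤ x := by positivity
  set α := Real.sqrt M with hαdef
  set β := Real.sqrt m with hβdef
  set ξ := Real.sqrt X with hξdef
  set η := Real.sqrt Y with hηdef
  have hα2 : α ^ 2 = M := Real.sq_sqrt hM.le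
  have hβ2 : β ^ 2 = m := Real.sq_sqrt hm.le
  have hξ2 : ξ ^ 2 = X := Real.sq_sqrt hX
  have hη2 : η ^ 2 = Y := Real.sq_sqrt hY
  have hβ : 0 < β := Real.sqrt_pos.mpr hm
  have hα0 : 0 ≤ α := Real.sqrt_nonneg M
  have hξ0 : 0 ≤ ξ := Real.sqrt_nonneg X
  have hη0 : 0 ≤ η := Real.sqrt_nonneg Y
  set E := Real.exp (Real.tanh u * x) with hEdef
  have hE0 : 0 < E := Real.exp_pos _
  have hC : E ^ 2 = Real.exp (Real.tanh u * Real.log (M / m)) := by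
    rw [hEdef, sq, ← Real.exp_add, hxdef]; ring_nf
  have hC1 : 1 ≤ Real.exp (Real.tanh u * Real.log (M / m)) :=
    Real.one_le_exp (mul_nonneg (my_tanh_nonneg hu) hlog)
  -- α = β * exp x
  have hex : Real.exp x ^ 2 = M / m := by
    rw [sq, ← Real.exp_add, hxdef,
      show Real.log (M / m) / 2 + Real.log (M / m) / 2 = Real.log (M / m) by ring]
    exact Real.exp_log (by positivity)
  have h1 : (β * Real.exp x) ^ 2 = M := by
    rw [mul_pow, hβ2, hex]; field_simp
  have hαβ : α = β * Real.exp x := by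
    rw [hαdef, ← h1, Real.sqrt_sq (by positivity)]
  have hs4 : Real.sqrt (Real.exp (4 * u)) = Real.exp (2 * u) := by
    rw [show (4:ℝ) * u = 2 * u + 2 * u by ring, Real.exp_add,
      Real.sqrt_mul_self (Real.exp_nonneg _)]
  have hξη : ξ ≤ Real.exp (2 * u) * η := by
    rw [hξdef, hηdef, ← hs4, ← Real.sqrt_mul (by positivity)]
    exact Real.sqrt_le_sqrt hXY
  have hG : Real.sqrt (M * m * (X * Y)) = α * β * (ξ * η) := by
    have h2 : M * m * (X * Y) = (α * β * (ξ * η)) ^ 2 := by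
      rw [← hα2, ← hβ2, ← hξ2, ← hη2]; ring
    rw [h2, Real.sqrt_sq (by positivity)]
  have lin := lin_step u x ξ η hu hx hξ0 hη0 hξη
  have main : α * ξ + β * η ≤ E * (α * η + β * ξ) := by
    have h3 := mul_le_mul_of_nonneg_left lin hβ.le
    rw [hαβ]; nlinarith [h3]
  have hsq : (α * ξ + β * η) ^ 2 ≤ (E * (α * η + β * ξ)) ^ 2 :=
    pow_le_pow_left₀ (by positivity) main 2
  have e1 : (α * ξ + β * η) ^ 2 = M * X + m * Y + 2 * (α * β * (ξ * η)) := by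
    rw [← hα2, ← hβ2, ← hξ2, ← hη2]; ring
  have e2 : (E * (α * η + β * ξ)) ^ 2
      = Real.exp (Real.tanh u * Real.log (M / m)) * (M * Y + m * X)
        + Real.exp (Real.tanh u * Real.log (M / m)) * (2 * (α * β * (ξ * η))) := by
    rw [← hC, ← hα2, ← hβ2, ← hξ2, ← hη2]; ring
  rw [hG] at hZ
  have hprod : (Real.exp (Real.tanh u * Real.log (M / m)) - 1) * (2 * (α * β * (ξ * η)))
      ≤ (Real.exp (Real.tanh u * Real.log (M / m)) - 1) * Z :=
    mul_le_mul_of_nonneg_left hZ (by linarith)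
  linarith [hsq, e1 ▸ hsq]

/-- Core inequality at the level of sums. -/
lemma core_sum {N : ℕ} (hN : 0 < N) (a b t : Fin N → ℝ)
    (ha : ∀ k, 0 < a k) (hb : ∀ k, 0 < b k) (m M u : ℝ) (hm : 0 < m) (hmM : m ≤ M)
    (hu : 0 ≤ u) (ht1 : ∀ k, m ≤ t k) (ht2 : ∀ k, t k ≤ M)
    (hK : ∀ k l, a k * b l ≤ Real.exp (4 * u) * (a l * b k)) :
    (∑ k, a k * t k) * (∑ k, b k)
      ≤ Real.exp (Real.tanh u * Real.log (M / m)) * ((∑ k, b k * t k) * (∑ k, a k)) := by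
  haveI : Nonempty (Fin N) := Fin.pos_iff_nonempty.mp hN
  rcases eq_or_lt_of_le hmM with hMm | hMm
  · -- M = m : all t k = m
    have htm : ∀ k, t k = m := fun k => le_antisymm (hMm ▸ ht2 k) (ht1 k)
    have h1 : (∑ k, a k * t k) = m * ∑ k, a k := by
      rw [Finset.mul_sum]; exact Finset.sum_congr rfl fun k _ => by rw [htm k]; ring
    have h2 : (∑ k, b k * t k) = m * ∑ k, b k := by
      rw [Finset.mul_sum]; exact Finset.sum_congr rfl fun k _ => by rw [htm k]; ring
    have hC1 : 1 ≤ Real.exp (Real.tanh u * Real.log (M / m)) := by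
      rw [← hMm, div_self hm.ne', Real.log_one, mul_zero, Real.exp_zero]
    rw [h1, h2]
    have hT : 0 ≤ m * ((∑ k, b k) * (∑ k, a k)) := by
      have hbn : 0 ≤ (∑ k : Fin N, b k) := Finset.sum_nonneg fun k _ => (hb k).le
      have han : 0 ≤ (∑ k : Fin N, a k) := Finset.sum_nonneg fun k _ => (ha k).le
      positivity
    nlinarith [hC1, hT]
  · -- m < M
    have hMm0 : 0 < M - m := by linarith
    set w1 : Fin N → ℝ := fun k => (t k - m) / (M - m) with hw1
    set w0 : Fin N → ℝ := fun k => (M - t k) / (M - m) with hw0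
    have hw1n : ∀ k, 0 ≤ w1 k := fun k => div_nonneg (by linarith [ht1 k]) hMm0.le
    have hw0n : ∀ k, 0 ≤ w0 k := fun k => div_nonneg (by linarith [ht2 k]) hMm0.le
    have hwsum : ∀ k, w1 k + w0 k = 1 := fun k => by
      rw [hw1, hw0]; field_simp; ring
    have hwt : ∀ k, M * w1 k + m * w0 k = t k := fun k => by
      rw [hw1, hw0]; field_simp; ring
    set A1 := ∑ k, a k * w1 k with hA1
    set A0 := ∑ k, a k * w0 k with hA0
    set B1 := ∑ k, b k * w1 k with hB1
    set B0 := ∑ k, b k * w0 k with hB0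
    have hA1n : 0 ≤ A1 := Finset.sum_nonneg fun k _ => mul_nonneg (ha k).le (hw1n k)
    have hA0n : 0 ≤ A0 := Finset.sum_nonneg fun k _ => mul_nonneg (ha k).le (hw0n k)
    have hB1n : 0 ≤ B1 := Finset.sum_nonneg fun k _ => mul_nonneg (hb k).le (hw1n k)
    have hB0n : 0 ≤ B0 := Finset.sum_nonneg fun k _ => mul_nonneg (hb k).le (hw0n k)
    have hSa : (∑ k, a k) = A1 + A0 := by
      rw [hA1, hA0, ← Finset.sum_add_distrib]
      exact Finset.sum_congr rfl fun k _ => by rw [← mul_add, hwsum k, mul_one]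
    have hSb : (∑ k, b k) = B1 + B0 := by
      rw [hB1, hB0, ← Finset.sum_add_distrib]
      exact Finset.sum_congr rfl fun k _ => by rw [← mul_add, hwsum k, mul_one]
    have hSat : (∑ k, a k * t k) = M * A1 + m * A0 := by
      rw [hA1, hA0, Finset.mul_sum, Finset.mul_sum, ← Finset.sum_add_distrib]
      exact Finset.sum_congr rfl fun k _ => by rw [← hwt k]; ring
    have hSbt : (∑ k, b k * t k) = M * B1 + m * B0 := by
      rw [hB1, hB0, Finset.mul_sum, Finset.mul_sum, ← Finset.sum_add_distrib]
      exact Finset.sum_congr rfl fun k _ => by rw [← hwt k]; ring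
    -- spread inequality : A1 * B0 ≤ exp(4u) * (A0 * B1)
    have hspread : A1 * B0 ≤ Real.exp (4 * u) * (A0 * B1) := by
      calc A1 * B0 = ∑ k, ∑ l, (a k * w1 k) * (b l * w0 l) := by
            rw [hA1, hB0, Finset.sum_mul_sum]
        _ ≤ ∑ k, ∑ l, Real.exp (4 * u) * ((a l * w0 l) * (b k * w1 k)) := by
            apply Finset.sum_le_sum; intro k _
            apply Finset.sum_le_sum; intro l _
            have h := mul_le_mul_of_nonneg_right (hK k l)
              (mul_nonneg (hw1n k) (hw0n l))
            calc (a k * w1 k) * (b l * w0 l) = a k * b l * (w1 k * w0 l) := by ring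
              _ ≤ Real.exp (4 * u) * (a l * b k) * (w1 k * w0 l) := h
              _ = Real.exp (4 * u) * ((a l * w0 l) * (b k * w1 k)) := by ring
        _ = ∑ l, ∑ k, Real.exp (4 * u) * ((a l * w0 l) * (b k * w1 k)) := Finset.sum_comm
        _ = Real.exp (4 * u) * (A0 * B1) := by
            rw [hA0, hB1, Finset.sum_mul_sum, Finset.mul_sum]
            exact Finset.sum_congr rfl fun l _ => (Finset.mul_sum _ _ _).symm
    set X := A1 * B0 with hXdef
    set Y := A0 * B1 with hYdef
    set Z := M * (A1 * B1) + m * (A0 * B0) with hZdef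
    have hXn : 0 ≤ X := mul_nonneg hA1n hB0n
    have hYn : 0 ≤ Y := mul_nonneg hA0n hB1n
    have hPn : 0 ≤ M * (A1 * B1) :=
      mul_nonneg (by linarith) (mul_nonneg hA1n hB1n)
    have hQn : 0 ≤ m * (A0 * B0) :=
      mul_nonneg hm.le (mul_nonneg hA0n hB0n)
    have hZineq : 2 * Real.sqrt (M * m * (X * Y)) ≤ Z := by
      have hpq : M * m * (X * Y) = (M * (A1 * B1)) * (m * (A0 * B0)) := by
        rw [hXdef, hYdef]; ring
      rw [hpq, Real.sqrt_mul hPn]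
      have hsq := sq_nonneg (Real.sqrt (M * (A1 * B1)) - Real.sqrt (m * (A0 * B0)))
      rw [sub_sq, Real.sq_sqrt hPn, Real.sq_sqrt hQn] at hsq
      rw [hZdef]; linarith
    have hq := quad_step m M X Y Z u hm hmM hXn hYn hu hspread hZineq
    rw [hXdef, hYdef, hZdef] at hq
    rw [hSat, hSb, hSbt, hSa]
    nlinarith [hq]

lemma fin_sup_attained {N : ℕ} [Nonempty (Fin N)] (f : Fin N → ℝ) :
    ∃ i, (⨆ j, f j) = f i ∧ ∀ j, f j ≤ f i := by
  obtain ⟨i, hi⟩ := Finite.exists_max f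
  exact ⟨i, le_antisymm (ciSup_le hi) (le_ciSup (Finite.bddAbove_range f) i), hi⟩

lemma fin_inf_attained {N : ℕ} [Nonempty (Fin N)] (f : Fin N → ℝ) :
    ∃ i, (⨅ j, f j) = f i ∧ ∀ j, f i ≤ f j := by
  obtain ⟨i, hi⟩ := Finite.exists_min f
  exact ⟨i, le_antisymm (ciInf_le (Finite.bddBelow_range f) i) (le_ciInf hi), hi⟩

lemma projDiam_bound {N : ℕ} (A : Matrix (Fin N) (Fin N) ℝ) (i j k l : Fin N) :
    Real.log ((A i k * A j l) / (A j k * A i l)) ≤ projDiam A := by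
  haveI : Nonempty (Fin N) := ⟨i⟩
  unfold projDiam
  calc Real.log ((A i k * A j l) / (A j k * A i l))
      ≤ ⨆ l', Real.log ((A i k * A j l') / (A j k * A i l')) :=
        le_ciSup (f := fun l' =>
          Real.log ((A i k * A j l') / (A j k * A i l'))) (Finite.bddAbove_range _) l
    _ ≤ ⨆ k', ⨆ l', Real.log ((A i k' * A j l') / (A j k' * A i l')) :=
        le_ciSup (f := fun k' => ⨆ l',
          Real.log ((A i k' * A j l') / (A j k' * A i l'))) (Finite.bddAbove_range _) k
    _ ≤ ⨆ j', ⨆ k', ⨆ l', Real.log ((A i k' * A j' l') / (A j' k' * A i l')) :=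
        le_ciSup (f := fun j' => ⨆ k', ⨆ l',
          Real.log ((A i k' * A j' l') / (A j' k' * A i l'))) (Finite.bddAbove_range _) j
    _ ≤ ⨆ i', ⨆ j', ⨆ k', ⨆ l', Real.log ((A i' k' * A j' l') / (A j' k' * A i' l')) :=
        le_ciSup (f := fun i' => ⨆ j', ⨆ k', ⨆ l',
          Real.log ((A i' k' * A j' l') / (A j' k' * A i' l'))) (Finite.bddAbove_range _) i

lemma projDiam_nonneg {N : ℕ} (hN : 0 < N) (A : Matrix (Fin N) (Fin N) ℝ)
    (hA : ∀ i j, 0 < A i j) : 0 ≤ projDiam A := by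
  have i : Fin N := ⟨0, hN⟩
  have h := projDiam_bound A i i i i
  rwa [div_self (ne_of_gt (mul_pos (hA i i) (hA i i))), Real.log_one] at h

/-- Birkhoff's contraction theorem: a matrix `A` with strictly
positive entries maps the positive cone into itself and is a strict
contraction in the Hilbert projective metric, with contraction coefficient
`tanh(Δ(A)/4) < 1`. -/
theorem stmt18 {N : ℕ} (hN : 0 < N) (A : Matrix (Fin N) (Fin N) ℝ)
    (hA : ∀ i j, 0 < A i j) :
    (∀ x : Fin N → ℝ, (∀ i, 0 < x i) → ∀ i, 0 < A.mulVec x i) ∧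
      Real.tanh (projDiam A / 4) < 1 ∧
      (∀ x y : Fin N → ℝ, (∀ i, 0 < x i) → (∀ i, 0 < y i) →
        hilbertDist (A.mulVec x) (A.mulVec y)
          ≤ Real.tanh (projDiam A / 4) * hilbertDist x y) := by
  haveI : Nonempty (Fin N) := Fin.pos_iff_nonempty.mp hN
  have hmap : ∀ x : Fin N → ℝ, (∀ i, 0 < x i) → ∀ i, 0 < A.mulVec x i := by
    intro x hx i
    have : A.mulVec x i = ∑ k, A i k * x k := by
      simp [Matrix.mulVec, dotProduct]
    rw [this]
    exact Finset.sum_pos (fun k _ => mul_pos (hA i k) (hx k)) Finset.univ_nonempty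
  refine ⟨hmap, my_tanh_lt_one _, ?_⟩
  intro x y hx hy
  set u : ℝ := projDiam A / 4 with hudef
  have hΔ0 : 0 ≤ projDiam A := projDiam_nonneg hN A hA
  have hu : 0 ≤ u := by rw [hudef]; linarith
  obtain ⟨i₁, hMeq, hMub⟩ := fin_sup_attained (fun i => x i / y i)
  obtain ⟨j₁, hmeq, hmlb⟩ := fin_inf_attained (fun i => x i / y i)
  obtain ⟨i₀, hReq, hRub⟩ := fin_sup_attained (fun i => A.mulVec x i / A.mulVec y i)
  obtain ⟨j₀, hreq, hrlb⟩ := fin_inf_attained (fun i => A.mulVec x i / A.mulVec y i)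

  set m : ℝ := x j₁ / y j₁ with hmdef
  set M : ℝ := x i₁ / y i₁ with hMdef
  have hm : 0 < m := div_pos (hx j₁) (hy j₁)
  have hmM : m ≤ M := hmlb i₁
  -- the vectors a, b
  set a : Fin N → ℝ := fun k => A i₀ k * y k with hadef
  set b : Fin N → ℝ := fun k => A j₀ k * y k with hbdef
  have ha : ∀ k, 0 < a k := fun k => mul_pos (hA i₀ k) (hy k)
  have hb : ∀ k, 0 < b k := fun k => mul_pos (hA j₀ k) (hy k)
  have hK : ∀ k l, a k * b l ≤ Real.exp (4 * u) * (a l * b k) := by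
    intro k l
    have hlog := projDiam_bound A i₀ j₀ k l
    have h4u : projDiam A = 4 * u := by rw [hudef]; ring
    rw [h4u] at hlog
    have hQ : 0 < A j₀ k * A i₀ l := mul_pos (hA j₀ k) (hA i₀ l)
    have hP : 0 < A i₀ k * A j₀ l := mul_pos (hA i₀ k) (hA j₀ l)
    have hdiv : A i₀ k * A j₀ l ≤ Real.exp (4 * u) * (A j₀ k * A i₀ l) := by
      have h' := (Real.log_le_iff_le_exp (div_pos hP hQ)).mp hlog
      rw [div_le_iff₀ hQ] at h'
      linarith [h']
    calc a k * b l = (A i₀ k * A j₀ l) * (y k * y l) := by rw [hadef, hbdef]; ring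
      _ ≤ Real.exp (4 * u) * (A j₀ k * A i₀ l) * (y k * y l) :=
          mul_le_mul_of_nonneg_right hdiv (mul_pos (hy k) (hy l)).le
      _ = Real.exp (4 * u) * (a l * b k) := by rw [hadef, hbdef]; ring
  have hcore := core_sum hN a b (fun k => x k / y k) ha hb m M u hm hmM hu
    (fun k => hmlb k) (fun k => hMub k) hK
  -- rewrite the sums as matrix-vector products
  have e1 : (∑ k, a k * (x k / y k)) = A.mulVec x i₀ := by
    simp only [Matrix.mulVec, dotProduct, hadef]
    exact Finset.sum_congr rfl fun k _ => by
      have hyk := (hy k).ne'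
      field_simp
  have e2 : (∑ k, a k) = A.mulVec y i₀ := by
    simp only [Matrix.mulVec, dotProduct, hadef]
  have e3 : (∑ k, b k * (x k / y k)) = A.mulVec x j₀ := by
    simp only [Matrix.mulVec, dotProduct, hbdef]
    exact Finset.sum_congr rfl fun k _ => by
      have hyk := (hy k).ne'
      field_simp
  have e4 : (∑ k, b k) = A.mulVec y j₀ := by
    simp only [Matrix.mulVec, dotProduct, hbdef]
  rw [e1, e2, e3, e4] at hcore
  have hx0 : 0 < A.mulVec x i₀ := hmap x hx i₀
  have hy0 : 0 < A.mulVec y i₀ := hmap y hy i₀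
  have hx1 : 0 < A.mulVec x j₀ := hmap x hx j₀
  have hy1 : 0 < A.mulVec y j₀ := hmap y hy j₀
  -- final computation
  simp only [hilbertDist]
  rw [hReq, hreq, hMeq, hmeq]
  have hq1 : (0:ℝ) < A.mulVec x i₀ / A.mulVec y i₀ / (A.mulVec x j₀ / A.mulVec y j₀) :=
    div_pos (div_pos hx0 hy0) (div_pos hx1 hy1)
  have hkey : A.mulVec x i₀ / A.mulVec y i₀ / (A.mulVec x j₀ / A.mulVec y j₀)
      ≤ Real.exp (Real.tanh u * Real.log (M / m)) := by
    have heq : A.mulVec x i₀ / A.mulVec y i₀ / (A.mulVec x j₀ / A.mulVec y j₀)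
        = (A.mulVec x i₀ * A.mulVec y j₀) / (A.mulVec x j₀ * A.mulVec y i₀) := by
      field_simp
    rw [heq, div_le_iff₀ (mul_pos hx1 hy0)]
    exact hcore
  calc Real.log (A.mulVec x i₀ / A.mulVec y i₀ / (A.mulVec x j₀ / A.mulVec y j₀))
      ≤ Real.log (Real.exp (Real.tanh u * Real.log (M / m))) :=
        Real.log_le_log hq1 hkey
    _ = Real.tanh u * Real.log (M / m) := Real.log_exp _
    _ = Real.tanh (projDiam A / 4) * Real.log (x i₁ / y i₁ / (x j₁ / y j₁)) := by
        rw [hudef, hMdef, hmdef]
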